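/- Let X ⊆ ℝ^d, ρ ≥ 1, P a Borel probability measure on X with finite ρ-th moment, R = {R_1,…,R_N} a measurable partition of X, and C = {c_1,…,c_N} ⊂ X. Let f : X → ℝ^q be the affine map f(x) = Ax + b with A ∈ ℝ^{q×d}, b ∈ ℝ^q, and let ‖A‖ := sup_{x ≠ 0} ‖Ax‖/‖x‖ be the induced operator norm. Define θ_d := ( Σ_{k=1}^N ∫_{R_k} ‖x − c_k‖^ρ dP(x) )^{1/ρ}. Then for any θ ≥ 0, sup_{Q ∈ B_θ(P)} W_ρ(f#Q, f#Δ_{R,C}#P) ≤ ‖A‖ (θ + θ_d). -/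

import Mathlib

open MeasureTheory ENNReal

noncomputable section

/-- `ℝ^d` with the Euclidean norm. -/
abbrev Euc (d : ℕ) : Type := EuclideanSpace ℝ (Fin d)

/-- The set of couplings `Γ(μ, ν)` of two measures: probability measures on the product
whose first marginal is `μ` and second marginal is `ν`. -/
def Couplings {β : Type*} [MeasurableSpace β] (μ ν : Measure β) :
    Set (Measure (β × β)) :=
  {γ | IsProbabilityMeasure γ ∧ γ.map Prod.fst = μ ∧ γ.map Prod.snd = ν}

/-- The ρ-Wasserstein distance
`W_ρ(μ, ν) = (inf_{γ ∈ Γ(μ,ν)} ∫ ‖x - y‖^ρ dγ(x,y))^{1/ρ}`. -/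
noncomputable def Wass {β : Type*} [MeasurableSpace β] [NormedAddCommGroup β]
    (ρ : ℝ) (μ ν : Measure β) : ℝ :=
  ((⨅ γ ∈ Couplings μ ν, ∫⁻ p, ENNReal.ofReal (‖p.1 - p.2‖ ^ ρ) ∂γ).toReal) ^ (1/ρ)

/-- `μ` has finite ρ-th moment: `∫ ‖x‖^ρ dμ(x) < ∞`. -/
def HasFiniteMoment {β : Type*} [MeasurableSpace β] [NormedAddCommGroup β]
    (ρ : ℝ) (μ : Measure β) : Prop :=
  ∫⁻ x, ENNReal.ofReal (‖x‖ ^ ρ) ∂μ < ⊤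

/-- A measurable partition of a set `X` into `N` regions. -/
def IsMeasPartition {β : Type*} [MeasurableSpace β] {N : ℕ}
    (R : Fin N → Set β) (X : Set β) : Prop :=
  (∀ i, MeasurableSet (R i)) ∧ (⋃ i, R i) = X ∧ ∀ i j, i ≠ j → R i ∩ R j = ∅

/-- The quantization operator `Δ_{R,C}(x) = Σ_i c_i 1_{R_i}(x)`. -/
noncomputable def quantMap {β : Type*} [AddCommMonoid β] {N : ℕ}
    (R : Fin N → Set β) (c : Fin N → β) (x : β) : β :=
  ∑ i, (R i).indicator (fun _ => c i) x

/-! ### Auxiliary lemmas -/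

lemma ofReal_norm_rpow {E : Type*} [NormedAddCommGroup E] (v : E) {ρ : ℝ} (hρ : 0 ≤ ρ) :
    ENNReal.ofReal (‖v‖ ^ ρ) = (‖v‖₊ : ℝ≥0∞) ^ ρ := by
  rw [← ENNReal.ofReal_rpow_of_nonneg (norm_nonneg v) hρ, ofReal_norm]; rfl

lemma ennreal_add_rpow_le {ρ : ℝ} (hρ : 0 ≤ ρ) (a b : ℝ≥0∞) :
    (a + b) ^ ρ ≤ 2 ^ ρ * (a ^ ρ + b ^ ρ) := by
  calc (a + b) ^ ρ ≤ (2 * max a b) ^ ρ := by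
        apply ENNReal.rpow_le_rpow _ hρ
        rw [two_mul]
        exact add_le_add (le_max_left a b) (le_max_right a b)
    _ = 2 ^ ρ * (max a b) ^ ρ := ENNReal.mul_rpow_of_nonneg _ _ hρ
    _ ≤ 2 ^ ρ * (a ^ ρ + b ^ ρ) := by
        gcongr
        rcases le_total a b with h | h
        · rw [max_eq_right h]; exact (ENNReal.rpow_le_rpow le_rfl hρ).trans le_add_self
        · rw [max_eq_left h]; exact (ENNReal.rpow_le_rpow le_rfl hρ).trans le_self_add

/-- If `u` and `v` have finite ρ-th moment under `μ`, so does `u - v`. -/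
lemma lintegral_rpow_sub_lt_top {α : Type*} [MeasurableSpace α] (μ : Measure α)
    {ρ : ℝ} (hρ : 0 ≤ ρ) {d : ℕ} {u v : α → Euc d} (hu : Measurable u) (hv : Measurable v)
    (hul : ∫⁻ a, ENNReal.ofReal (‖u a‖ ^ ρ) ∂μ < ⊤)
    (hvl : ∫⁻ a, ENNReal.ofReal (‖v a‖ ^ ρ) ∂μ < ⊤) :
    ∫⁻ a, ENNReal.ofReal (‖u a - v a‖ ^ ρ) ∂μ < ⊤ := by
  have hmu : Measurable fun a => ((‖u a‖₊ : ℝ≥0∞)) ^ ρ :=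
    ENNReal.continuous_rpow_const.measurable.comp (hu.nnnorm.coe_nnreal_ennreal)
  have hmv : Measurable fun a => ((‖v a‖₊ : ℝ≥0∞)) ^ ρ :=
    ENNReal.continuous_rpow_const.measurable.comp (hv.nnnorm.coe_nnreal_ennreal)
  simp_rw [ofReal_norm_rpow _ hρ] at hul hvl ⊢
  have hpt : ∀ a, ((‖u a - v a‖₊ : ℝ≥0∞)) ^ ρ
      ≤ 2 ^ ρ * ((‖u a‖₊ : ℝ≥0∞) ^ ρ + (‖v a‖₊ : ℝ≥0∞) ^ ρ) := by
    intro a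
    refine le_trans (ENNReal.rpow_le_rpow ?_ hρ) (ennreal_add_rpow_le hρ _ _)
    rw [← ENNReal.coe_add]
    exact_mod_cast nnnorm_sub_le (u a) (v a)
  calc ∫⁻ a, ((‖u a - v a‖₊ : ℝ≥0∞)) ^ ρ ∂μ
      ≤ ∫⁻ a, 2 ^ ρ * ((‖u a‖₊ : ℝ≥0∞) ^ ρ + (‖v a‖₊ : ℝ≥0∞) ^ ρ) ∂μ := lintegral_mono hpt
    _ = 2 ^ ρ * ((∫⁻ a, (‖u a‖₊ : ℝ≥0∞) ^ ρ ∂μ) + ∫⁻ a, (‖v a‖₊ : ℝ≥0∞) ^ ρ ∂μ) := by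
        rw [lintegral_const_mul' _ _ (by
          exact (ENNReal.rpow_lt_top_of_nonneg hρ ENNReal.ofNat_ne_top).ne), lintegral_add_left hmu]
    _ < ⊤ := by
        refine ENNReal.mul_lt_top ?_ ?_
        · exact ENNReal.rpow_lt_top_of_nonneg hρ ENNReal.ofNat_ne_top
        · exact ENNReal.add_lt_top.mpr ⟨hul, hvl⟩

/-- linear case. For the affine map `f(x) = A x + b`, every `Q ∈ B_θ(P)`
satisfies `W_ρ(f#Q, f#Δ_{R,C}#P) ≤ ‖A‖ (θ + θ_d)`, where `‖A‖` is the induced operator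
norm of `A`. -/
theorem stmt5 {d q N : ℕ} (ρ : ℝ) (hρ : 1 ≤ ρ) (θ : ℝ) (hθ : 0 ≤ θ)
    (X : Set (Euc d)) (hXm : MeasurableSet X)
    (P : Measure (Euc d)) (hP : IsProbabilityMeasure P) (hPX : P X = 1)
    (hPm : HasFiniteMoment ρ P)
    (R : Fin N → Set (Euc d)) (hR : IsMeasPartition R X)
    (c : Fin N → Euc d) (hc : ∀ k, c k ∈ X)
    (A : Euc d →L[ℝ] Euc q) (b : Euc q)
    (θd : ℝ) (hθd : θd = (∑ k, ∫ x in R k, ‖x - c k‖ ^ ρ ∂P) ^ (1/ρ)) :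
    ∀ Q : Measure (Euc d), IsProbabilityMeasure Q → Q X = 1 → HasFiniteMoment ρ Q →
      Wass ρ P Q ≤ θ →
      Wass ρ (Q.map (fun x => A x + b))
          ((P.map (quantMap R c)).map (fun x => A x + b)) ≤ ‖A‖ * (θ + θd) := by
  intro Q hQ hQX hQm hWQ
  have hρ0 : (0:ℝ) < ρ := lt_of_lt_of_le one_pos hρ
  have hρ0' : (0:ℝ) ≤ ρ := hρ0.le
  have hρne : ρ ≠ 0 := hρ0.ne'
  set f : Euc d → Euc q := fun x => A x + b with hfdef
  have hmf : Measurable f := (A.continuous.add continuous_const).measurable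
  set g : Euc d → Euc d := quantMap R c with hgdef
  have hmg : Measurable g := by
    rw [hgdef]
    unfold quantMap
    exact Finset.measurable_sum _ fun i _ => Measurable.indicator measurable_const (hR.1 i)
  have hgval : ∀ k, ∀ x ∈ R k, g x = c k := by
    intro k x hx
    rw [hgdef]
    unfold quantMap
    rw [Finset.sum_eq_single k]
    · exact Set.indicator_of_mem hx _
    · intro i _ hik
      apply Set.indicator_of_notMem
      intro hxi
      have h := hR.2.2 i k hik
      have : x ∈ R i ∩ R k := ⟨hxi, hx⟩
      rw [h] at this
      exact this
    · simp
  -- facts about θd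
  have hsum_nonneg : (0:ℝ) ≤ ∑ k, ∫ x in R k, ‖x - c k‖ ^ ρ ∂P :=
    Finset.sum_nonneg fun k _ => integral_nonneg fun x => Real.rpow_nonneg (norm_nonneg _) _
  have hθd0 : 0 ≤ θd := hθd ▸ Real.rpow_nonneg hsum_nonneg _
  have hθdρ : θd ^ ρ = ∑ k, ∫ x in R k, ‖x - c k‖ ^ ρ ∂P := by
    rw [hθd, ← Real.rpow_mul hsum_nonneg, one_div, inv_mul_cancel₀ hρne, Real.rpow_one]
  -- measurability of the real cost functions
  have hmrnorm : ∀ {α : Type} [MeasurableSpace α] {e : ℕ} (u v : α → Euc e), Measurable u →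
      Measurable v → Measurable fun a => ENNReal.ofReal (‖u a - v a‖ ^ ρ) := by
    intro α _ e u v hu hv
    exact ENNReal.measurable_ofReal.comp
      (((Real.continuous_rpow_const hρ0').measurable).comp ((hu.sub hv).norm))
  -- integrability of x ↦ ‖x - c k‖^ρ on R k
  have hfinck : ∀ k, ∫⁻ x, ENNReal.ofReal (‖x - c k‖ ^ ρ) ∂P < ⊤ := by
    intro k
    refine lintegral_rpow_sub_lt_top P hρ0' measurable_id measurable_const hPm ?_
    rw [lintegral_const]
    simp only [measure_univ, mul_one]
    exact ENNReal.ofReal_lt_top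
  have hint : ∀ k, Integrable (fun x => ‖x - c k‖ ^ ρ) (P.restrict (R k)) := by
    intro k
    constructor
    · exact (((Real.continuous_rpow_const hρ0').comp
        ((continuous_id.sub continuous_const).norm))).aestronglyMeasurable
    · rw [hasFiniteIntegral_iff_norm]
      calc ∫⁻ x, ENNReal.ofReal ‖‖x - c k‖ ^ ρ‖ ∂(P.restrict (R k))
          = ∫⁻ x, ENNReal.ofReal (‖x - c k‖ ^ ρ) ∂(P.restrict (R k)) := by
            apply lintegral_congr
            intro x
            rw [Real.norm_of_nonneg (Real.rpow_nonneg (norm_nonneg _) _)]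
        _ ≤ ∫⁻ x, ENNReal.ofReal (‖x - c k‖ ^ ρ) ∂P :=
            lintegral_mono' Measure.restrict_le_self le_rfl
        _ < ⊤ := hfinck k
  -- the key identity for the quantization error
  have hDP : ∫⁻ x, ENNReal.ofReal (‖x - g x‖ ^ ρ) ∂P = ENNReal.ofReal (θd ^ ρ) := by
    have haeX : ∀ᵐ x ∂P, x ∈ X := by
      have hc : P Xᶜ = 0 := by
        rw [measure_compl hXm (measure_ne_top P X), measure_univ, hPX, tsub_self]
      rw [ae_iff]
      exact hc
    have hres : P.restrict X = P := Measure.restrict_eq_self_of_ae_mem haeX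
    have hdisj : Pairwise (Function.onFun Disjoint R) := fun i j hij =>
      Set.disjoint_iff_inter_eq_empty.mpr (hR.2.2 i j hij)
    calc ∫⁻ x, ENNReal.ofReal (‖x - g x‖ ^ ρ) ∂P
        = ∫⁻ x in ⋃ i, R i, ENNReal.ofReal (‖x - g x‖ ^ ρ) ∂P := by
          rw [hR.2.1, hres]
      _ = ∑' k, ∫⁻ x in R k, ENNReal.ofReal (‖x - g x‖ ^ ρ) ∂P :=
          lintegral_iUnion hR.1 hdisj _
      _ = ∑ k, ∫⁻ x in R k, ENNReal.ofReal (‖x - g x‖ ^ ρ) ∂P := tsum_fintype _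
      _ = ∑ k, ∫⁻ x in R k, ENNReal.ofReal (‖x - c k‖ ^ ρ) ∂P := by
          refine Finset.sum_congr rfl fun k _ => ?_
          refine setLIntegral_congr_fun (hR.1 k) (fun x hx => ?_)
          rw [hgval k x hx]
      _ = ∑ k, ENNReal.ofReal (∫ x in R k, ‖x - c k‖ ^ ρ ∂P) := by
          refine Finset.sum_congr rfl fun k _ => ?_
          exact (ofReal_integral_eq_lintegral_ofReal (hint k)
            (ae_of_all _ fun x => Real.rpow_nonneg (norm_nonneg _) _)).symm
      _ = ENNReal.ofReal (∑ k, ∫ x in R k, ‖x - c k‖ ^ ρ ∂P) :=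
          (ENNReal.ofReal_sum_of_nonneg fun k _ =>
            integral_nonneg fun x => Real.rpow_nonneg (norm_nonneg _) _).symm
      _ = ENNReal.ofReal (θd ^ ρ) := by rw [hθdρ]
  -- the source infimum
  set J := ⨅ γ ∈ Couplings P Q, ∫⁻ p, ENNReal.ofReal (‖p.1 - p.2‖ ^ ρ) ∂γ with hJ
  have hprodmem : P.prod Q ∈ Couplings P Q := by
    refine ⟨inferInstance, ?_, ?_⟩
    · simp [measure_univ]
    · simp [measure_univ]
  have hprodfin : ∫⁻ p : Euc d × Euc d, ENNReal.ofReal (‖p.1 - p.2‖ ^ ρ) ∂(P.prod Q) < ⊤ := by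
    refine lintegral_rpow_sub_lt_top _ hρ0' measurable_fst measurable_snd ?_ ?_
    · have h1 : (P.prod Q).map Prod.fst = P := by simp [measure_univ]
      have h2 := lintegral_map (μ := P.prod Q)
        (f := fun x : Euc d => ENNReal.ofReal (‖x‖ ^ ρ))
        (ENNReal.measurable_ofReal.comp
          (((Real.continuous_rpow_const hρ0').measurable).comp measurable_norm)) measurable_fst
      rw [h1] at h2
      rw [← h2]; exact hPm
    · have h1 : (P.prod Q).map Prod.snd = Q := by simp [measure_univ]
      have h2 := lintegral_map (μ := P.prod Q)
        (f := fun x : Euc d => ENNReal.ofReal (‖x‖ ^ ρ))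
        (ENNReal.measurable_ofReal.comp
          (((Real.continuous_rpow_const hρ0').measurable).comp measurable_norm)) measurable_snd
      rw [h1] at h2
      rw [← h2]; exact hQm
  have hJtop : J ≠ ⊤ :=
    ne_top_of_le_ne_top hprodfin.ne (iInf₂_le _ hprodmem)
  have hJθ : J ≤ ENNReal.ofReal (θ ^ ρ) := by
    have hWQ' : J.toReal ^ (1/ρ) ≤ θ := hWQ
    have h2 : (J.toReal ^ (1/ρ)) ^ ρ ≤ θ ^ ρ :=
      Real.rpow_le_rpow (Real.rpow_nonneg ENNReal.toReal_nonneg _) hWQ' hρ0'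
    rw [← Real.rpow_mul ENNReal.toReal_nonneg, one_div, inv_mul_cancel₀ hρne,
      Real.rpow_one] at h2
    calc J = ENNReal.ofReal J.toReal := (ENNReal.ofReal_toReal hJtop).symm
      _ ≤ ENNReal.ofReal (θ ^ ρ) := ENNReal.ofReal_le_ofReal h2
  -- abbreviation for the target
  set I := ⨅ γ ∈ Couplings (Q.map f) ((P.map g).map f),
      ∫⁻ p, ENNReal.ofReal (‖p.1 - p.2‖ ^ ρ) ∂γ with hI
  -- key estimate for every ε > 0
  have key : ∀ ε : ℝ, 0 < ε →
      Wass ρ (Q.map f) ((P.map g).map f) ≤ ‖A‖ * ((θ ^ ρ + ε) ^ (1/ρ) + θd) := by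
    intro ε hε
    have hεne : ENNReal.ofReal ε ≠ 0 := by
      simp only [ne_eq, ENNReal.ofReal_eq_zero, not_le]; linarith
    have hlt : (⨅ γ ∈ Couplings P Q, ∫⁻ p, ENNReal.ofReal (‖p.1 - p.2‖ ^ ρ) ∂γ)
        < J + ENNReal.ofReal ε := by
      rw [← hJ]; exact ENNReal.lt_add_right hJtop hεne
    simp only [iInf_lt_iff] at hlt
    obtain ⟨γ, hγmem, hγcost⟩ := hlt
    obtain ⟨hγprob, hγ1, hγ2⟩ := hγmem
    haveI := hγprob
    have hγcost' : ∫⁻ p, ENNReal.ofReal (‖p.1 - p.2‖ ^ ρ) ∂γ ≤ ENNReal.ofReal (θ ^ ρ + ε) := by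
      rw [ENNReal.ofReal_add (Real.rpow_nonneg hθ _) hε.le]
      exact le_trans hγcost.le (add_le_add hJθ le_rfl)
    -- the transported coupling
    set φ : Euc d × Euc d → Euc q × Euc q := fun z => (f z.2, f (g z.1)) with hφdef
    have hmφ : Measurable φ :=
      (hmf.comp measurable_snd).prodMk (hmf.comp (hmg.comp measurable_fst))
    set η := γ.map φ with hη
    have hηmem : η ∈ Couplings (Q.map f) ((P.map g).map f) := by
      refine ⟨Measure.isProbabilityMeasure_map hmφ.aemeasurable, ?_, ?_⟩
      · rw [hη, Measure.map_map measurable_fst hmφ]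
        have : (Prod.fst ∘ φ) = f ∘ Prod.snd := rfl
        rw [this, ← Measure.map_map hmf measurable_snd, hγ2]
      · rw [hη, Measure.map_map measurable_snd hmφ]
        have : (Prod.snd ∘ φ) = f ∘ (g ∘ Prod.fst) := rfl
        rw [this, ← Measure.map_map hmf (hmg.comp measurable_fst),
          ← Measure.map_map hmg measurable_fst, hγ1]
    -- cost of η
    have hcostη : ∫⁻ p, ENNReal.ofReal (‖p.1 - p.2‖ ^ ρ) ∂η
        = ∫⁻ z, ENNReal.ofReal (‖f z.2 - f (g z.1)‖ ^ ρ) ∂γ := by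
      rw [hη]
      exact lintegral_map (hmrnorm _ _ measurable_fst measurable_snd) hmφ
    set C := ∫⁻ z : Euc d × Euc d, ENNReal.ofReal (‖z.2 - g z.1‖ ^ ρ) ∂γ with hC
    have hcostη_le : ∫⁻ p, ENNReal.ofReal (‖p.1 - p.2‖ ^ ρ) ∂η
        ≤ ENNReal.ofReal (‖A‖ ^ ρ) * C := by
      rw [hcostη]
      have hpt : ∀ z : Euc d × Euc d, ENNReal.ofReal (‖f z.2 - f (g z.1)‖ ^ ρ)
          ≤ ENNReal.ofReal (‖A‖ ^ ρ) * ENNReal.ofReal (‖z.2 - g z.1‖ ^ ρ) := by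
        intro z
        have h1 : ‖f z.2 - f (g z.1)‖ ≤ ‖A‖ * ‖z.2 - g z.1‖ := by
          have he : f z.2 - f (g z.1) = A (z.2 - g z.1) := by
            simp only [hfdef, map_sub]
            abel
          rw [he]
          exact A.le_opNorm _
        have h2 : ‖f z.2 - f (g z.1)‖ ^ ρ ≤ ‖A‖ ^ ρ * ‖z.2 - g z.1‖ ^ ρ := by
          calc ‖f z.2 - f (g z.1)‖ ^ ρ ≤ (‖A‖ * ‖z.2 - g z.1‖) ^ ρ :=
              Real.rpow_le_rpow (norm_nonneg _) h1 hρ0'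
            _ = ‖A‖ ^ ρ * ‖z.2 - g z.1‖ ^ ρ :=
              Real.mul_rpow (norm_nonneg _) (norm_nonneg _)
        rw [← ENNReal.ofReal_mul (Real.rpow_nonneg (norm_nonneg _) _)]
        exact ENNReal.ofReal_le_ofReal h2
      calc ∫⁻ z, ENNReal.ofReal (‖f z.2 - f (g z.1)‖ ^ ρ) ∂γ
          ≤ ∫⁻ z, ENNReal.ofReal (‖A‖ ^ ρ) * ENNReal.ofReal (‖z.2 - g z.1‖ ^ ρ) ∂γ :=
            lintegral_mono hpt
        _ = ENNReal.ofReal (‖A‖ ^ ρ) * C := by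
            rw [hC, lintegral_const_mul' _ _ ENNReal.ofReal_ne_top]
    -- Minkowski inequality
    set pe : ℝ≥0∞ := ENNReal.ofReal ρ with hpe
    have hp0 : pe ≠ 0 := by
      simp only [hpe, ne_eq, ENNReal.ofReal_eq_zero, not_le]; linarith
    have hptop : pe ≠ ⊤ := ENNReal.ofReal_ne_top
    have hp1 : (1:ℝ≥0∞) ≤ pe := ENNReal.one_le_ofReal.mpr hρ
    have hpt : pe.toReal = ρ := ENNReal.toReal_ofReal hρ0'
    have hsn : ∀ h : Euc d × Euc d → Euc d, Measurable h →
        eLpNorm h pe γ = (∫⁻ z, ENNReal.ofReal (‖h z‖ ^ ρ) ∂γ) ^ (1/ρ) := by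
      intro h hmh
      rw [eLpNorm_eq_lintegral_rpow_enorm_toReal hp0 hptop, hpt]
      congr 1
      exact lintegral_congr fun z => by rw [ofReal_norm_rpow (h z) hρ0']; rfl
    have hu : Measurable (fun z : Euc d × Euc d => z.2 - z.1) :=
      measurable_snd.sub measurable_fst
    have hv : Measurable (fun z : Euc d × Euc d => z.1 - g z.1) :=
      measurable_fst.sub (hmg.comp measurable_fst)
    have hmink := eLpNorm_add_le (μ := γ) (p := pe)
      hu.aestronglyMeasurable hv.aestronglyMeasurable hp1
    have heq : (fun z : Euc d × Euc d => z.2 - z.1) + (fun z => z.1 - g z.1)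
        = fun z : Euc d × Euc d => z.2 - g z.1 := by
      funext z
      simp only [Pi.add_apply]
      abel
    rw [heq, hsn (fun z : Euc d × Euc d => z.2 - g z.1)
      (measurable_snd.sub (hmg.comp measurable_fst)), hsn _ hu, hsn _ hv] at hmink
    -- identify the three integrals
    have huγ : ∫⁻ z : Euc d × Euc d, ENNReal.ofReal (‖z.2 - z.1‖ ^ ρ) ∂γ
        = ∫⁻ p, ENNReal.ofReal (‖p.1 - p.2‖ ^ ρ) ∂γ := by
      exact lintegral_congr fun z => by rw [norm_sub_rev]
    have hvγ : ∫⁻ z : Euc d × Euc d, ENNReal.ofReal (‖z.1 - g z.1‖ ^ ρ) ∂γ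
        = ENNReal.ofReal (θd ^ ρ) := by
      have h2 := lintegral_map (μ := γ)
        (f := fun x : Euc d => ENNReal.ofReal (‖x - g x‖ ^ ρ))
        (hmrnorm _ _ measurable_id hmg) measurable_fst
      rw [hγ1] at h2
      rw [← hDP, ← h2]
    rw [huγ, hvγ] at hmink
    -- bound the ε-term
    have hterm1 : (∫⁻ p, ENNReal.ofReal (‖p.1 - p.2‖ ^ ρ) ∂γ) ^ (1/ρ)
        ≤ ENNReal.ofReal ((θ ^ ρ + ε) ^ (1/ρ)) := by
      rw [← ENNReal.ofReal_rpow_of_nonneg (by positivity) (by positivity)]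
      exact ENNReal.rpow_le_rpow hγcost' (by positivity)
    have hterm2 : (ENNReal.ofReal (θd ^ ρ)) ^ (1/ρ) = ENNReal.ofReal θd := by
      rw [ENNReal.ofReal_rpow_of_nonneg (Real.rpow_nonneg hθd0 _) (by positivity),
        ← Real.rpow_mul hθd0, mul_one_div, div_self hρne, Real.rpow_one]
    set s : ℝ := (θ ^ ρ + ε) ^ (1/ρ) + θd with hs
    have hs0 : 0 ≤ s := add_nonneg (Real.rpow_nonneg (by positivity) _) hθd0
    have hCs : C ≤ ENNReal.ofReal (s ^ ρ) := by
      have h3 : C ^ (1/ρ) ≤ ENNReal.ofReal s := by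
        calc C ^ (1/ρ) ≤ (∫⁻ p, ENNReal.ofReal (‖p.1 - p.2‖ ^ ρ) ∂γ) ^ (1/ρ)
            + (ENNReal.ofReal (θd ^ ρ)) ^ (1/ρ) := hmink
          _ ≤ ENNReal.ofReal ((θ ^ ρ + ε) ^ (1/ρ)) + ENNReal.ofReal θd := by
              rw [hterm2]; exact add_le_add hterm1 le_rfl
          _ = ENNReal.ofReal s := by
              rw [hs, ENNReal.ofReal_add (Real.rpow_nonneg (by positivity) _) hθd0]
      have h4 : (C ^ (1/ρ)) ^ ρ ≤ (ENNReal.ofReal s) ^ ρ := ENNReal.rpow_le_rpow h3 hρ0'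
      rw [← ENNReal.rpow_mul, one_div, inv_mul_cancel₀ hρne, ENNReal.rpow_one] at h4
      rw [← ENNReal.ofReal_rpow_of_nonneg hs0 hρ0']
      exact h4
    -- assemble
    have hIle : I ≤ ENNReal.ofReal ((‖A‖ * s) ^ ρ) := by
      calc I ≤ ∫⁻ p, ENNReal.ofReal (‖p.1 - p.2‖ ^ ρ) ∂η := iInf₂_le _ hηmem
        _ ≤ ENNReal.ofReal (‖A‖ ^ ρ) * C := hcostη_le
        _ ≤ ENNReal.ofReal (‖A‖ ^ ρ) * ENNReal.ofReal (s ^ ρ) := by gcongr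
        _ = ENNReal.ofReal (‖A‖ ^ ρ * s ^ ρ) :=
            (ENNReal.ofReal_mul (Real.rpow_nonneg (norm_nonneg _) _)).symm
        _ = ENNReal.ofReal ((‖A‖ * s) ^ ρ) := by
            rw [Real.mul_rpow (norm_nonneg _) hs0]
    have hIt : I.toReal ≤ (‖A‖ * s) ^ ρ :=
      ENNReal.toReal_le_of_le_ofReal (Real.rpow_nonneg (mul_nonneg (norm_nonneg _) hs0) _) hIle
    show I.toReal ^ (1/ρ) ≤ ‖A‖ * s
    calc I.toReal ^ (1/ρ) ≤ ((‖A‖ * s) ^ ρ) ^ (1/ρ) :=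
        Real.rpow_le_rpow ENNReal.toReal_nonneg hIt (by positivity)
      _ = ‖A‖ * s := by
        rw [← Real.rpow_mul (mul_nonneg (norm_nonneg _) hs0), mul_one_div, div_self hρne,
          Real.rpow_one]
  -- take ε → 0⁺
  have hcont : Filter.Tendsto (fun ε : ℝ => ‖A‖ * ((θ ^ ρ + ε) ^ (1/ρ) + θd))
      (nhdsWithin 0 (Set.Ioi 0)) (nhds (‖A‖ * (θ + θd))) := by
    have h1 : Filter.Tendsto (fun ε : ℝ => θ ^ ρ + ε) (nhdsWithin 0 (Set.Ioi 0))
        (nhds (θ ^ ρ)) := by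
      have h0 : Filter.Tendsto (fun ε : ℝ => θ ^ ρ + ε) (nhds 0) (nhds (θ ^ ρ + 0)) :=
        (continuous_const.add continuous_id).tendsto 0
      rw [add_zero] at h0
      exact h0.mono_left nhdsWithin_le_nhds
    have h2 : Filter.Tendsto (fun t : ℝ => t ^ (1/ρ)) (nhds (θ ^ ρ)) (nhds θ) := by
      have hc : ContinuousAt (fun t : ℝ => t ^ (1/ρ)) (θ ^ ρ) :=
        Real.continuousAt_rpow_const _ _ (Or.inr (by positivity))
      have hval : (θ ^ ρ) ^ (1/ρ) = θ := by
        rw [← Real.rpow_mul hθ, mul_one_div, div_self hρne, Real.rpow_one]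
      have ht := hc.tendsto
      rwa [hval] at ht
    exact ((h2.comp h1).add_const θd).const_mul ‖A‖
  exact ge_of_tendsto hcont (eventually_mem_nhdsWithin.mono fun ε hε => key ε hε)
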